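/- Let a, b ∈ ℝ with a ≠ 0, β > 0, and let (ξ_n)_{n≥0} be i.i.d. standard normal random variables. Define x_0 = 0, l_0 = 0, and for n ≥ 0 set x_{n+1} = b/a + ξ_n/(2^{l_n} √2 a β), where l_{n+1} ∈ ℤ is chosen so that 2^{l_{n+1}}|b - a x_{n+1}| ∈ (1/2, 1]. Then for every n ≥ 1, |x_{n+1} - b/a| < (1/|2a|) (√2/β)^{n+1} |ξ_0 ⋯ ξ_n| almost surely (on the event where all x_k ≠ b/a so that l_k is well defined). -/

import Mathlib

open Filter

/-- Upper bound on the error of the iterative scheme: if `x_{n+1} = b/a + ξ_n/(2^{l_n}√2 a β)`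
with `2^{l_{n+1}}|b - a x_{n+1}| ∈ (1/2, 1]`, then for `n ≥ 1`,
`|x_{n+1} - b/a| < (1/|2a|)(√2/β)^{n+1}|ξ_0 ⋯ ξ_n|`. -/
theorem error_upper_bound
    (a b β : ℝ) (ha : a ≠ 0) (hβ : 0 < β)
    (ξ x : ℕ → ℝ) (l : ℕ → ℤ)
    (hx0 : x 0 = 0) (hl0 : l 0 = 0)
    (hx : ∀ n, x (n + 1) = b / a + ξ n / ((2 : ℝ) ^ (l n) * Real.sqrt 2 * a * β))
    (hl : ∀ n, (2 : ℝ) ^ (l (n + 1)) * |b - a * x (n + 1)| ∈ Set.Ioc (1 / 2 : ℝ) 1) :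
    ∀ n, 1 ≤ n →
      |x (n + 1) - b / a| <
        (1 / |2 * a|) * (Real.sqrt 2 / β) ^ (n + 1) * |∏ i ∈ Finset.range (n + 1), ξ i| := by
  have hs2 : Real.sqrt 2 * Real.sqrt 2 = 2 := Real.mul_self_sqrt (by norm_num)
  have hs2sq : Real.sqrt 2 ^ 2 = 2 := Real.sq_sqrt (by norm_num)
  have hs2pos : (0:ℝ) < Real.sqrt 2 := Real.sqrt_pos.mpr (by norm_num)
  have hapos : (0:ℝ) < |a| := abs_pos.mpr ha
  have hp : ∀ k : ℤ, (0:ℝ) < (2:ℝ) ^ k := fun k => zpow_pos (by norm_num) k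
  have habs : ∀ n, |x (n + 1) - b / a|
      = |ξ n| / ((2 : ℝ) ^ (l n) * Real.sqrt 2 * |a| * β) := by
    intro n
    rw [hx n, add_sub_cancel_left, abs_div]
    congr 1
    rw [abs_mul, abs_mul, abs_mul, abs_of_pos (hp (l n)), abs_of_pos hs2pos,
      abs_of_pos hβ]
  have hξ : ∀ n, 0 < |ξ n| := by
    intro n
    by_contra h
    push_neg at h
    have h0 : |ξ n| = 0 := le_antisymm h (abs_nonneg _)
    have h1 := (hl n).1
    have h2 : |x (n + 1) - b / a| = 0 := by rw [habs n, h0, zero_div]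
    have h3 : x (n + 1) = b / a := by
      have := abs_eq_zero.mp h2; linarith [this]
    have : b - a * x (n + 1) = 0 := by
      rw [h3]; field_simp; ring
    rw [this, abs_zero, mul_zero] at h1
    linarith
  have step : ∀ n, ((2:ℝ) ^ (l (n + 1)))⁻¹
      < (Real.sqrt 2 / β) * |ξ n| * ((2:ℝ) ^ (l n))⁻¹ := by
    intro n
    have h1 := (hl n).1
    have heq : b - a * x (n + 1) = -(a * (x (n + 1) - b / a)) := by
      field_simp
      ring
    rw [heq, abs_neg, abs_mul, habs n] at h1
    rw [inv_lt_iff_one_lt_mul₀ (hp _)]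
    have hne : ((2:ℝ) ^ (l n)) ≠ 0 := ne_of_gt (hp _)
    have key : (Real.sqrt 2 / β) * |ξ n| * ((2:ℝ) ^ (l n))⁻¹
        = 2 * (|a| * (|ξ n| / ((2:ℝ) ^ (l n) * Real.sqrt 2 * |a| * β))) := by
      field_simp
      ring_nf
      rw [hs2sq]
      ring
    rw [key]
    nlinarith [hp (l (n+1)), h1]
  have key : ∀ n, 1 ≤ n → ((2:ℝ) ^ (l n))⁻¹
      < (Real.sqrt 2 / β) ^ n * |∏ i ∈ Finset.range n, ξ i| := by
    intro n hn
    induction n with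
    | zero => omega
    | succ m ih =>
      rcases Nat.eq_or_lt_of_le hn with h | h
      · -- m = 0
        have hm : m = 0 := by omega
        subst hm
        have := step 0
        rw [hl0] at this
        simpa [abs_mul] using this
      · have hm : 1 ≤ m := by omega
        have ihm := ih hm
        have hst := step m
        calc ((2:ℝ) ^ (l (m+1)))⁻¹ < (Real.sqrt 2 / β) * |ξ m| * ((2:ℝ) ^ (l m))⁻¹ := hst
          _ < (Real.sqrt 2 / β) * |ξ m| *
              ((Real.sqrt 2 / β) ^ m * |∏ i ∈ Finset.range m, ξ i|) := by
              exact mul_lt_mul_of_pos_left ihm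
                (mul_pos (div_pos hs2pos hβ) (hξ m))
          _ = (Real.sqrt 2 / β) ^ (m+1) * |∏ i ∈ Finset.range (m+1), ξ i| := by
              rw [Finset.prod_range_succ, abs_mul, pow_succ]
              ring
  intro n hn
  rw [habs n]
  have hkey := key n hn
  have hrw : (1 / |2 * a|) * (Real.sqrt 2 / β) ^ (n + 1) * |∏ i ∈ Finset.range (n + 1), ξ i|
      = ((Real.sqrt 2 / β) ^ n * |∏ i ∈ Finset.range n, ξ i|) * |ξ n|
        / (Real.sqrt 2 * |a| * β) := by
    rw [Finset.prod_range_succ, abs_mul, pow_succ, abs_mul]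
    rw [abs_of_pos (show (0:ℝ) < 2 by norm_num)]
    field_simp
    ring_nf
    rw [hs2sq]
    ring
  rw [hrw]
  have : |ξ n| / ((2:ℝ) ^ (l n) * Real.sqrt 2 * |a| * β)
      = ((2:ℝ) ^ (l n))⁻¹ * |ξ n| / (Real.sqrt 2 * |a| * β) := by
    field_simp
  rw [this]
  have hnum : ((2:ℝ) ^ (l n))⁻¹ * |ξ n|
      < ((Real.sqrt 2 / β) ^ n * |∏ i ∈ Finset.range n, ξ i|) * |ξ n| :=
    mul_lt_mul_of_pos_right hkey (hξ n)
  exact div_lt_div_of_pos_right hnum (by positivity)
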